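/- arXiv:2307.12340 — 2 statements merged into one kernel-verified Lean document; each statement's English description precedes it below -/
import Mathlib

section
/- Assume g ∈ C²([0,∞)) satisfies (D1) g(t)>0, g'(t)≤0 and g''(t)≥0, (D2) g ∉ L¹(0,∞), and (D3) |d_t^k g(t)| ≤ C_k g(t)(1/(1+t))^k for k=1,2. Set h(t) = 1 − g'(t)/2. Consider the 2×2 complex matrix A(t,ξ) with entries A₁₁ = 0, A₁₂ = |ξ|, A₂₁ = |ξ|, A₂₂ = i g(t)|ξ|², and let E(·,s,ξ) be the fundamental solution, i.e. ∂_t E(t,s,ξ) = i A(t,ξ) E(t,s,ξ), E(s,s,ξ) = I. Then there exist positive constants C and C' such that for all ξ and all s ≤ t with g(τ)²|ξ|² ≥ 5h(τ) for all τ ∈ [s,t]: |E^{(11)}(t,s,ξ)| ≤ C' e^{−C∫_s^t dτ/g(τ)}, |E^{(12)}(t,s,ξ)| ≤ C' e^{−C∫_s^t dτ/g(τ)}/(g(s)|ξ|), |E^{(21)}(t,s,ξ)| ≤ C' e^{−C∫_s^t dτ/g(τ)} g(t)|ξ|, and |E^{(22)}(t,s,ξ)| ≤ C' e^{−C∫_s^t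 dτ/g(τ)} g(t)/g(s). -/
open Set MeasureTheory

set_option maxHeartbeats 1000000

section AuxLemmas
open Complex
open Set MeasureTheory Complex

lemma aux_sqrt_bound {f q : ℝ → ℂ} {c b ε τ : ℝ}
    (hf : HasDerivAt f (-(c:ℂ) * f τ + Complex.I * (b:ℂ) * q τ) τ)
    (hc : 0 ≤ c) (hε : 0 < ε) :
    ∃ d, HasDerivAt (fun r => Real.sqrt (Complex.normSq (f r) + ε ^ 2)) d τ ∧
      d ≤ -c * Real.sqrt (Complex.normSq (f τ) + ε ^ 2) + c * ε + |b| * ‖q τ‖ := by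
  set W : ℂ := -(c:ℂ) * f τ + Complex.I * (b:ℂ) * q τ with hW
  have hre : HasDerivAt (fun r => (f r).re) W.re τ :=
    (Complex.reCLM.hasFDerivAt.comp_hasDerivAt τ hf)
  have him : HasDerivAt (fun r => (f r).im) W.im τ :=
    (Complex.imCLM.hasFDerivAt.comp_hasDerivAt τ hf)
  have hu : HasDerivAt (fun r => Complex.normSq (f r) + ε ^ 2)
      (2 * ((f τ).re * W.re + (f τ).im * W.im)) τ := by
    simp only [Complex.normSq_apply]
    exact (((hre.mul hre).add (him.mul him)).add_const (ε ^ 2)).congr_deriv (by ring)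

  have hpos : 0 < Complex.normSq (f τ) + ε ^ 2 :=
    add_pos_of_nonneg_of_pos (Complex.normSq_nonneg _) (by positivity)
  have hU := hu.sqrt hpos.ne'
  refine ⟨_, hU, ?_⟩
  set U := Real.sqrt (Complex.normSq (f τ) + ε ^ 2) with hUdef
  have hU0 : 0 < U := Real.sqrt_pos.mpr hpos
  have hU2 : U ^ 2 = Complex.normSq (f τ) + ε ^ 2 := Real.sq_sqrt hpos.le
  have hεU : ε ≤ U := by
    rw [hUdef]
    calc ε = Real.sqrt (ε ^ 2) := by rw [Real.sqrt_sq hε.le]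
    _ ≤ _ := Real.sqrt_le_sqrt (by nlinarith [Complex.normSq_nonneg (f τ)])
  set A := ‖f τ‖ with hAdef
  set Bq := ‖q τ‖ with hBdef
  have hA0 : 0 ≤ A := norm_nonneg _
  have hB0 : 0 ≤ Bq := norm_nonneg _
  have hA2 : A ^ 2 = (f τ).re ^ 2 + (f τ).im ^ 2 := by
    have : A ^ 2 = Complex.normSq (f τ) := by
      rw [hAdef, Complex.sq_norm]
    rw [this, Complex.normSq_apply]; ring
  have hB2 : Bq ^ 2 = (q τ).re ^ 2 + (q τ).im ^ 2 := by
    have : Bq ^ 2 = Complex.normSq (q τ) := by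
      rw [hBdef, Complex.sq_norm]
    rw [this, Complex.normSq_apply]; ring
  have hAU : A ≤ U := by
    have h1 : A = Real.sqrt (Complex.normSq (f τ)) := by
      rw [hAdef, Complex.norm_def]
    rw [h1, hUdef]
    exact Real.sqrt_le_sqrt (by nlinarith)
  have hWre : W.re = -c * (f τ).re - b * (q τ).im := by
    rw [hW]
    simp [Complex.add_re, Complex.neg_re, Complex.mul_re, Complex.mul_im]
    ring
  have hWim : W.im = -c * (f τ).im + b * (q τ).re := by
    rw [hW]
    simp [Complex.add_im, Complex.neg_im, Complex.mul_re, Complex.mul_im] <;> ring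
  have hprod : A ^ 2 * Bq ^ 2 = ((f τ).re ^ 2 + (f τ).im ^ 2) * ((q τ).re ^ 2 + (q τ).im ^ 2) := by
    rw [hA2, hB2]
  clear_value U A Bq
  have hxsq : ((f τ).im * (q τ).re - (f τ).re * (q τ).im) ^ 2 ≤ (A * Bq) ^ 2 := by
    nlinarith [sq_nonneg ((f τ).re * (q τ).re + (f τ).im * (q τ).im), hprod]
  have hAB0 : 0 ≤ A * Bq := mul_nonneg hA0 hB0
  have habs : |(f τ).im * (q τ).re - (f τ).re * (q τ).im| ≤ A * Bq := by
    rcases abs_cases ((f τ).im * (q τ).re - (f τ).re * (q τ).im) with ⟨he, _⟩ | ⟨he, _⟩ <;>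
      rw [he] <;> nlinarith [hxsq]
  have hbx : b * ((f τ).im * (q τ).re - (f τ).re * (q τ).im) ≤ |b| * (A * Bq) := by
    calc b * ((f τ).im * (q τ).re - (f τ).re * (q τ).im)
        ≤ |b * ((f τ).im * (q τ).re - (f τ).re * (q τ).im)| := le_abs_self _
    _ = |b| * |(f τ).im * (q τ).re - (f τ).re * (q τ).im| := abs_mul _ _
    _ ≤ |b| * (A * Bq) := mul_le_mul_of_nonneg_left habs (abs_nonneg b)
  have hnum : 2 * ((f τ).re * W.re + (f τ).im * W.im)
      ≤ 2 * (-c * (Complex.normSq (f τ)) + |b| * (A * Bq)) := by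
    have heq : (f τ).re * W.re + (f τ).im * W.im
        = -c * (Complex.normSq (f τ)) + b * ((f τ).im * (q τ).re - (f τ).re * (q τ).im) := by
      rw [hWre, hWim, Complex.normSq_apply]; ring
    rw [heq]; linarith
  rw [div_le_iff₀ (by positivity)]
  have hnormsq : Complex.normSq (f τ) = U ^ 2 - ε ^ 2 := by rw [hU2]; ring
  rw [hnormsq] at hnum
  have h2 : 2 * (-c * (U ^ 2 - ε ^ 2) + |b| * (A * Bq))
      ≤ (-c * U + c * ε + |b| * Bq) * (2 * U) := by
    nlinarith [mul_le_mul_of_nonneg_left hAU (mul_nonneg (abs_nonneg b) hB0),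
      mul_le_mul_of_nonneg_left hεU (mul_nonneg hc hε.le)]
  linarith

lemma aux_deriv_p {g g' : ℝ → ℝ} {w1 w2 : ℝ → ℂ} {a τ : ℝ}
    (hg : HasDerivAt g (g' τ) τ) (hg0 : g τ ≠ 0) (ha : a ≠ 0)
    (hw1 : HasDerivAt w1 (Complex.I * ((0:ℂ) * w1 τ + ((a:ℝ):ℂ) * w2 τ)) τ)
    (hw2 : HasDerivAt w2 (Complex.I * (((a:ℝ):ℂ) * w1 τ
      + (Complex.I * ((g τ * a ^ 2 : ℝ):ℂ)) * w2 τ)) τ) :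
    HasDerivAt (fun r => (((g r * a : ℝ):ℂ) * w2 r - Complex.I * w1 r)
        * (((g r ^ 2 * a ^ 2)⁻¹ : ℝ):ℂ))
      (-((g τ * a ^ 2 + (g' τ - 1) / g τ : ℝ):ℂ)
          * ((((g τ * a : ℝ):ℂ) * w2 τ - Complex.I * w1 τ) * (((g τ ^ 2 * a ^ 2)⁻¹ : ℝ):ℂ))
        + Complex.I * (((1 + g' τ) / (g τ ^ 3 * a ^ 2) : ℝ):ℂ) * w1 τ) τ := by
  have hga2 : g τ ^ 2 * a ^ 2 ≠ 0 := by positivity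
  have hw1' : HasDerivAt w1 (Complex.I * ((a:ℝ):ℂ) * w2 τ) τ := by
    convert hw1 using 1; ring
  have hw2' : HasDerivAt w2 (Complex.I * ((a:ℝ):ℂ) * w1 τ
      - ((g τ * a ^ 2 : ℝ):ℂ) * w2 τ) τ := by
    convert hw2 using 1
    linear_combination (-(((g τ * a ^ 2 : ℝ):ℂ) * w2 τ)) * Complex.I_sq
  have h1 : HasDerivAt (fun r => ((g r * a : ℝ):ℂ)) ((g' τ * a : ℝ):ℂ) τ :=
    (hg.mul_const a).ofReal_comp
  have h2 : HasDerivAt (fun r => (((g r ^ 2 * a ^ 2)⁻¹ : ℝ):ℂ))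
      (((-(2 * g τ * g' τ * a ^ 2) / ((g τ ^ 2 * a ^ 2) ^ 2) : ℝ):ℂ)) τ := by
    have := (((hg.pow 2).mul_const (a ^ 2)).inv hga2).ofReal_comp
    exact this.congr_deriv (by congr 1; simp only [Pi.pow_apply]; push_cast; ring)
  have hP0 : HasDerivAt (fun r => ((g r * a : ℝ):ℂ) * w2 r - Complex.I * w1 r)
      (((g' τ * a : ℝ):ℂ) * w2 τ
        + ((g τ * a : ℝ):ℂ) * (Complex.I * ((a:ℝ):ℂ) * w1 τ - ((g τ * a ^ 2 : ℝ):ℂ) * w2 τ)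
        - Complex.I * (Complex.I * ((a:ℝ):ℂ) * w2 τ)) τ :=
    (h1.mul hw2').sub (hw1'.const_mul Complex.I)
  have hmain := hP0.mul h2
  refine hmain.congr_deriv ?_
  symm
  -- abbreviate real atoms
  set G := g τ with hG
  set G' := g' τ with hG'
  set i2 : ℝ := (G ^ 2 * a ^ 2)⁻¹ with hi2
  set di2 : ℝ := -(2 * G * G' * a ^ 2) / ((G ^ 2 * a ^ 2) ^ 2) with hdi2
  set Dd : ℝ := G * a ^ 2 + (G' - 1) / G with hDd
  set σd : ℝ := (1 + G') / (G ^ 3 * a ^ 2) with hσd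
  have C1 : G' * a * i2 - (G * a) * (G * a ^ 2) * i2 + a * i2 + (G * a) * di2
      = -(Dd * ((G * a) * i2)) := by
    rw [hi2, hdi2, hDd]; field_simp; ring
  have C2 : (G * a) * a * i2 - di2 = Dd * i2 + σd := by
    rw [hi2, hdi2, hDd, hσd]; field_simp; ring
  clear_value i2 di2 Dd σd
  have C1c := congrArg (fun x : ℝ => (x : ℂ)) C1
  have C2c := congrArg (fun x : ℝ => (x : ℂ)) C2
  have hIC : Complex.I * Complex.I = -1 := Complex.I_mul_I
  linear_combination (norm := (push_cast; ring))
    (-(w2 τ)) * C1c + (-(Complex.I * w1 τ)) * C2c + (((a:ℝ):ℂ) * ((i2:ℝ):ℂ) * w2 τ) * hIC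

lemma aux_deriv_w1 {g : ℝ → ℝ} {w1 w2 : ℝ → ℂ} {a τ : ℝ}
    (hg0 : g τ ≠ 0) (ha : a ≠ 0)
    (hw1 : HasDerivAt w1 (Complex.I * ((0:ℂ) * w1 τ + ((a:ℝ):ℂ) * w2 τ)) τ) :
    HasDerivAt w1 (-(((g τ)⁻¹ : ℝ):ℂ) * w1 τ + Complex.I * ((g τ * a ^ 2 : ℝ):ℂ)
      * ((((g τ * a : ℝ):ℂ) * w2 τ - Complex.I * w1 τ)
        * (((g τ ^ 2 * a ^ 2)⁻¹ : ℝ):ℂ))) τ := by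
  convert hw1 using 1
  set G := g τ with hG
  set i2 : ℝ := (G ^ 2 * a ^ 2)⁻¹ with hi2
  set c1 : ℝ := G⁻¹ with hc1
  have R3 : (G * a ^ 2) * (G * a) * i2 = a := by rw [hi2]; field_simp
  have R4 : (G * a ^ 2) * i2 = c1 := by rw [hi2, hc1]; field_simp
  clear_value i2 c1
  have R3c := congrArg (Complex.ofReal) R3
  have R4c := congrArg (Complex.ofReal) R4
  have hIC : Complex.I * Complex.I = -1 := Complex.I_mul_I
  linear_combination (norm := (push_cast; ring))
    (Complex.I * w2 τ) * R3c + (w1 τ) * R4c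
      + (-(((G * a ^ 2 : ℝ):ℂ) * ((i2:ℝ):ℂ) * w1 τ)) * hIC

lemma aux_facts {G G' a : ℝ} (hGpos : 0 < G) (hG' : G' ≤ 0) (ha : 0 < a)
    (hell : 5 * (1 - G' / 2) ≤ G ^ 2 * a ^ 2) :
    |(1 + G') / (G ^ 3 * a ^ 2)| ≤ 2 / (5 * G) ∧
    0 ≤ G * a ^ 2 + (G' - 1) / G ∧
    G * a ^ 2 - 2 * (G * a ^ 2 + (G' - 1) / G) ≤ -G⁻¹ ∧
    (G ^ 2 * a ^ 2)⁻¹ ≤ 1 / 5 := by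
  have hX : 5 ≤ G ^ 2 * a ^ 2 := by nlinarith
  have hGG' : G * G' ≤ 0 := mul_nonpos_of_nonneg_of_nonpos hGpos.le hG'
  have hGe : G * (5 * (1 - G' / 2)) ≤ G * (G ^ 2 * a ^ 2) :=
    mul_le_mul_of_nonneg_left hell hGpos.le
  refine ⟨?_, ?_, ?_, ?_⟩
  · rw [abs_le]
    constructor
    · rw [neg_le, ← neg_div, div_le_div_iff₀ (by positivity) (by positivity)]
      nlinarith
    · rw [div_le_div_iff₀ (by positivity) (by positivity)]
      nlinarith
  · have e2 : G * a ^ 2 + (G' - 1) / G = (G ^ 2 * a ^ 2 + (G' - 1)) / G := by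
      field_simp
    rw [e2]
    apply div_nonneg _ hGpos.le
    nlinarith
  · have e3 : G * a ^ 2 - 2 * (G * a ^ 2 + (G' - 1) / G)
        = (-(G ^ 2 * a ^ 2) - 2 * G' + 2) / G := by
      field_simp; ring
    have e4 : -G⁻¹ = (-1) / G := by field_simp
    rw [e3, e4, div_le_div_iff₀ hGpos hGpos]
    nlinarith
  · have h5 : (G ^ 2 * a ^ 2)⁻¹ ≤ 5⁻¹ := inv_anti₀ (by norm_num) hX
    rw [show ((5:ℝ))⁻¹ = 1/5 by norm_num] at h5
    exact h5

lemma key_estimate (g g' : ℝ → ℝ) (a s t : ℝ) (hs0 : 0 ≤ s) (hst : s ≤ t) (ha : 0 < a)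
    (hgd : ∀ τ ∈ Icc s t, HasDerivWithinAt g (g' τ) (Ici 0) τ)
    (hgpos : ∀ τ ∈ Icc s t, 0 < g τ)
    (hg'np : ∀ τ ∈ Icc s t, g' τ ≤ 0)
    (hgcont : ContinuousOn g (Icc s t))
    (hg'cont : ContinuousOn g' (Icc s t))
    (hell : ∀ τ ∈ Icc s t, 5 * (1 - g' τ / 2) ≤ g τ ^ 2 * a ^ 2)
    (w1 w2 : ℝ → ℂ)
    (hw1 : ∀ τ ∈ Icc s t, HasDerivAt w1 (Complex.I * ((0:ℂ) * w1 τ + ((a:ℝ):ℂ) * w2 τ)) τ)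
    (hw2 : ∀ τ ∈ Icc s t, HasDerivAt w2 (Complex.I * (((a:ℝ):ℂ) * w1 τ
      + (Complex.I * ((g τ * a ^ 2 : ℝ):ℂ)) * w2 τ)) τ) :
    ‖w1 t‖ + ‖w2 t‖ / (g t * a) ≤
      4 * (‖w1 s‖ + ‖w2 s‖ / (g s * a)) * Real.exp (-(1/5 * ∫ τ in s..t, 1 / g τ)) := by
  have hsI : s ∈ Icc s t := ⟨le_refl s, hst⟩
  have htI : t ∈ Icc s t := ⟨hst, le_refl t⟩
  set p : ℝ → ℂ := fun r => (((g r * a : ℝ):ℂ) * w2 r - Complex.I * w1 r)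
      * (((g r ^ 2 * a ^ 2)⁻¹ : ℝ):ℂ) with hpdef
  set φ : ℝ → ℝ := fun x => ∫ τ in s..x, 1 / g τ with hφdef
  -- continuity of 1 / g
  have hg1cont : ContinuousOn (fun r => 1 / g r) (Icc s t) :=
    continuousOn_const.div hgcont (fun τ hτ => (hgpos τ hτ).ne')
  have hint : ∀ x ∈ Icc s t, ∀ y ∈ Icc s t, x ≤ y →
      IntervalIntegrable (fun r => 1 / g r) volume x y := by
    intro x hx y hy hxy
    apply ContinuousOn.intervalIntegrable
    apply hg1cont.mono
    rw [uIcc_of_le hxy]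
    exact Icc_subset_Icc hx.1 hy.2
  have hφs : φ s = 0 := intervalIntegral.integral_same
  have hφle : ∀ τ ∈ Icc s t, φ τ ≤ φ t := by
    intro τ hτ
    have hadd := intervalIntegral.integral_add_adjacent_intervals
      (hint s hsI τ hτ hτ.1) (hint τ hτ t htI hτ.2)
    have hnn : 0 ≤ ∫ r in τ..t, 1 / g r := by
      apply intervalIntegral.integral_nonneg hτ.2
      intro u hu
      have hu' : u ∈ Icc s t := ⟨hτ.1.trans hu.1, hu.2⟩
      exact div_nonneg zero_le_one (hgpos u hu').le
    simp only [hφdef]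
    linarith [hadd]
  have hφt0 : 0 ≤ φ t := by
    have := hφle s hsI
    rwa [hφs] at this
  have hφcont : ContinuousOn φ (Icc s t) := by
    have h := intervalIntegral.continuousOn_primitive_interval'
      (hint s hsI t htI hst) left_mem_uIcc
    rwa [uIcc_of_le hst] at h
  have hφd : ∀ τ ∈ Ioo s t, HasDerivAt φ (1 / g τ) τ := by
    intro τ hτ
    have hτI : τ ∈ Icc s t := Ioo_subset_Icc_self hτ
    have hci : ContinuousAt (fun r => 1 / g r) τ :=
      hg1cont.continuousAt (Icc_mem_nhds hτ.1 hτ.2)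
    exact intervalIntegral.integral_hasDerivAt_right (hint s hsI τ hτI hτI.1)
      ((hg1cont.mono Ioo_subset_Icc_self).stronglyMeasurableAtFilter isOpen_Ioo τ hτ) hci
  -- bound for the error coefficient
  obtain ⟨K, hK⟩ := IsCompact.exists_bound_of_continuousOn isCompact_Icc
    (f := fun τ => (g τ)⁻¹ + 2 * (g τ * a ^ 2 + (g' τ - 1) / g τ))
    (by
      apply ContinuousOn.add
      · exact hgcont.inv₀ (fun τ hτ => (hgpos τ hτ).ne')
      · apply ContinuousOn.mul continuousOn_const
        apply ContinuousOn.add (hgcont.mul continuousOn_const)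
        exact (hg'cont.sub continuousOn_const).div hgcont (fun τ hτ => (hgpos τ hτ).ne'))
  have hK0 : 0 ≤ K := le_trans (norm_nonneg _) (hK s hsI)
  have hKk : ∀ τ ∈ Icc s t, (g τ)⁻¹ + 2 * (g τ * a ^ 2 + (g' τ - 1) / g τ) ≤ K := by
    intro τ hτ
    exact le_trans (le_abs_self _) (hK τ hτ)
  -- continuity facts
  have hw1cont : ContinuousOn w1 (Icc s t) :=
    fun τ hτ => ((hw1 τ hτ).continuousAt).continuousWithinAt
  have hw2cont : ContinuousOn w2 (Icc s t) :=
    fun τ hτ => ((hw2 τ hτ).continuousAt).continuousWithinAt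
  have hpcont : ContinuousOn p (Icc s t) := by
    apply ContinuousOn.mul
    · apply ContinuousOn.sub
      · exact (Complex.continuous_ofReal.comp_continuousOn
          (hgcont.mul continuousOn_const)).mul hw2cont
      · exact continuousOn_const.mul hw1cont
    · apply Complex.continuous_ofReal.comp_continuousOn
      apply ContinuousOn.inv₀ ((hgcont.pow 2).mul continuousOn_const)
      intro τ hτ
      have := hgpos τ hτ
      simp only [Pi.mul_apply, Pi.pow_apply]
      positivity
  -- the main epsilon-regularized estimate
  have main : ∀ ε : ℝ, 0 < ε →
      Real.sqrt (Complex.normSq (w1 t) + ε ^ 2) + 2 * Real.sqrt (Complex.normSq (p t) + ε ^ 2)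
      ≤ (Real.sqrt (Complex.normSq (w1 s) + ε ^ 2)
          + 2 * Real.sqrt (Complex.normSq (p s) + ε ^ 2))
          * Real.exp (-(1/5 * φ t)) + ε * K * (t - s) := by
    intro ε hε
    set Lf : ℝ → ℝ := fun r => Real.sqrt (Complex.normSq (w1 r) + ε ^ 2)
        + 2 * Real.sqrt (Complex.normSq (p r) + ε ^ 2) with hLf
    set Gf : ℝ → ℝ := fun r => Lf r * Real.exp (1/5 * φ r)
        - ε * K * Real.exp (1/5 * φ t) * (r - s) with hGf
    have hGd : ∀ τ ∈ Ioo s t, ∃ d, HasDerivAt Gf d τ ∧ d ≤ 0 := by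
      intro τ hτ
      have hτI : τ ∈ Icc s t := Ioo_subset_Icc_self hτ
      have hτpos : 0 < τ := lt_of_le_of_lt hs0 hτ.1
      have hgA : HasDerivAt g (g' τ) τ := (hgd τ hτI).hasDerivAt (Ici_mem_nhds hτpos)
      have hgτ := hgpos τ hτI
      obtain ⟨fac1, fac2, fac3, fac4⟩ := aux_facts hgτ (hg'np τ hτI) ha (hell τ hτI)
      have hpd : HasDerivAt p
          (-((g τ * a ^ 2 + (g' τ - 1) / g τ : ℝ):ℂ) * p τ
            + Complex.I * (((1 + g' τ) / (g τ ^ 3 * a ^ 2) : ℝ):ℂ) * w1 τ) τ :=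
        aux_deriv_p hgA hgτ.ne' ha.ne' (hw1 τ hτI) (hw2 τ hτI)
      have hw1d : HasDerivAt w1
          (-(((g τ)⁻¹ : ℝ):ℂ) * w1 τ + Complex.I * ((g τ * a ^ 2 : ℝ):ℂ) * p τ) τ :=
        aux_deriv_w1 hgτ.ne' ha.ne' (hw1 τ hτI)
      obtain ⟨d1, hd1, hb1⟩ := aux_sqrt_bound hw1d (by positivity) hε
      obtain ⟨d2, hd2, hb2⟩ := aux_sqrt_bound hpd fac2 hε
      set U := Real.sqrt (Complex.normSq (w1 τ) + ε ^ 2) with hU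
      set V := Real.sqrt (Complex.normSq (p τ) + ε ^ 2) with hV
      have hU0 : 0 ≤ U := Real.sqrt_nonneg _
      have hV0 : 0 ≤ V := Real.sqrt_nonneg _
      have hnormle : ∀ z : ℂ, ‖z‖ ≤ Real.sqrt (Complex.normSq z + ε ^ 2) := by
        intro z
        have h1 : ‖z‖ = Real.sqrt (Complex.normSq z) := by
          rw [Complex.norm_def]
        rw [h1]
        exact Real.sqrt_le_sqrt (by nlinarith)
      have hpU : ‖p τ‖ ≤ V := hnormle (p τ)
      have hw1U : ‖w1 τ‖ ≤ U := hnormle (w1 τ)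
      -- pointwise Lyapunov inequality
      have habsβ : |g τ * a ^ 2| = g τ * a ^ 2 := _root_.abs_of_pos (by positivity)
      have hb1' : d1 ≤ -(g τ)⁻¹ * U + (g τ)⁻¹ * ε + (g τ * a ^ 2) * V := by
        have h2 : |g τ * a ^ 2| * ‖p τ‖ ≤ (g τ * a ^ 2) * V := by
          rw [habsβ]
          exact mul_le_mul_of_nonneg_left hpU (by positivity)
        calc d1 ≤ -(g τ)⁻¹ * U + (g τ)⁻¹ * ε + |g τ * a ^ 2| * ‖p τ‖ := hb1
        _ ≤ _ := by linarith
      have hb2' : d2 ≤ -(g τ * a ^ 2 + (g' τ - 1) / g τ) * V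
          + (g τ * a ^ 2 + (g' τ - 1) / g τ) * ε + (2 / (5 * g τ)) * U := by
        have h2 : |(1 + g' τ) / (g τ ^ 3 * a ^ 2)| * ‖w1 τ‖ ≤ (2 / (5 * g τ)) * U := by
          apply mul_le_mul fac1 hw1U (norm_nonneg _) (by positivity)
        calc d2 ≤ _ := hb2
        _ ≤ _ := by linarith
      have hsum : d1 + 2 * d2 ≤ -(1/5 * (1 / g τ)) * Lf τ
          + ε * ((g τ)⁻¹ + 2 * (g τ * a ^ 2 + (g' τ - 1) / g τ)) := by
        have e1 : -(g τ)⁻¹ + 2 * (2 / (5 * g τ)) = -(1/5 * (1 / g τ)) := by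
          field_simp; ring
        have h3 : (g τ * a ^ 2 - 2 * (g τ * a ^ 2 + (g' τ - 1) / g τ)) * V
            ≤ (-(g τ)⁻¹) * V := mul_le_mul_of_nonneg_right fac3 hV0
        have e4 : -(g τ)⁻¹ ≤ -(2/5) * (1 / g τ) := by
          have h0 : 0 < 1 / g τ := by positivity
          have einv : (g τ)⁻¹ = 1 / g τ := (one_div (g τ)).symm
          rw [einv]; linarith
        have hVe : (-(g τ)⁻¹) * V ≤ (-(2/5) * (1 / g τ)) * V :=
          mul_le_mul_of_nonneg_right e4 hV0
        have hcomb : d1 + 2 * d2 ≤ (-(g τ)⁻¹ + 2 * (2 / (5 * g τ))) * U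
            + (g τ * a ^ 2 - 2 * (g τ * a ^ 2 + (g' τ - 1) / g τ)) * V
            + ε * ((g τ)⁻¹ + 2 * (g τ * a ^ 2 + (g' τ - 1) / g τ)) := by
          nlinarith [hb1', hb2']
        have hLfτ : Lf τ = U + 2 * V := by simp only [hLf, hU, hV]
        rw [hLfτ]
        have ee : -(1/5 * (1 / g τ)) * (U + 2 * V)
            = -(1/5 * (1 / g τ)) * U + (-(2/5) * (1 / g τ)) * V := by ring
        rw [ee]
        have e1' : (-(g τ)⁻¹ + 2 * (2 / (5 * g τ))) * U = -(1/5 * (1 / g τ)) * U := by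
          rw [e1]
        nlinarith [hcomb, h3, hVe, e1']
      -- assemble the derivative of Gf and its sign
      have hE : HasDerivAt (fun r => Real.exp (1/5 * φ r))
          (Real.exp (1/5 * φ τ) * (1/5 * (1 / g τ))) τ := ((hφd τ hτ).const_mul (1/5)).exp
      have hdL : HasDerivAt Lf (d1 + 2 * d2) τ := hd1.add (hd2.const_mul 2)
      have hlin : HasDerivAt (fun r => ε * K * Real.exp (1/5 * φ t) * (r - s))
          (ε * K * Real.exp (1/5 * φ t)) τ := by
        simpa using ((hasDerivAt_id τ).sub_const s).const_mul (ε * K * Real.exp (1/5 * φ t))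
      refine ⟨_, (hdL.mul hE).sub hlin, ?_⟩
      have hEpos : 0 < Real.exp (1/5 * φ τ) := Real.exp_pos _
      have hTpos : 0 < Real.exp (1/5 * φ t) := Real.exp_pos _
      have hET : Real.exp (1/5 * φ τ) ≤ Real.exp (1/5 * φ t) :=
        Real.exp_le_exp.mpr (by nlinarith [hφle τ hτI])
      have hk0 : 0 ≤ (g τ)⁻¹ + 2 * (g τ * a ^ 2 + (g' τ - 1) / g τ) := by
        have hi : 0 ≤ (g τ)⁻¹ := inv_nonneg.mpr hgτ.le
        linarith [fac2]
      have h1 : (d1 + 2 * d2) * Real.exp (1/5 * φ τ)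
          ≤ (-(1/5 * (1 / g τ)) * Lf τ
            + ε * ((g τ)⁻¹ + 2 * (g τ * a ^ 2 + (g' τ - 1) / g τ))) * Real.exp (1/5 * φ τ) :=
        mul_le_mul_of_nonneg_right hsum hEpos.le
      have h2 : ε * ((g τ)⁻¹ + 2 * (g τ * a ^ 2 + (g' τ - 1) / g τ)) * Real.exp (1/5 * φ τ)
          ≤ ε * K * Real.exp (1/5 * φ t) := by
        calc ε * ((g τ)⁻¹ + 2 * (g τ * a ^ 2 + (g' τ - 1) / g τ)) * Real.exp (1/5 * φ τ)
            ≤ ε * K * Real.exp (1/5 * φ τ) :=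
              mul_le_mul_of_nonneg_right
                (mul_le_mul_of_nonneg_left (hKk τ hτI) hε.le) hEpos.le
        _ ≤ ε * K * Real.exp (1/5 * φ t) :=
              mul_le_mul_of_nonneg_left hET (by positivity)
      nlinarith [h1, h2]
    -- AntitoneOn via deriv
    have hGcont : ContinuousOn Gf (Icc s t) := by
      apply ContinuousOn.sub
      · apply ContinuousOn.mul
        · apply ContinuousOn.add
          · exact Real.continuous_sqrt.comp_continuousOn
              ((Complex.continuous_normSq.comp_continuousOn hw1cont).add continuousOn_const)
          · exact continuousOn_const.mul (Real.continuous_sqrt.comp_continuousOn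
              ((Complex.continuous_normSq.comp_continuousOn hpcont).add continuousOn_const))
        · exact Real.continuous_exp.comp_continuousOn (continuousOn_const.mul hφcont)
      · exact (continuous_const.mul (continuous_id.sub continuous_const)).continuousOn
    have hGdiff : DifferentiableOn ℝ Gf (interior (Icc s t)) := by
      rw [interior_Icc]
      intro τ hτ
      obtain ⟨d, hd, -⟩ := hGd τ hτ
      exact hd.differentiableAt.differentiableWithinAt
    have hGderiv : ∀ x ∈ interior (Icc s t), deriv Gf x ≤ 0 := by
      rw [interior_Icc]
      intro τ hτ
      obtain ⟨d, hd, hd0⟩ := hGd τ hτ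
      rw [hd.deriv]
      exact hd0
    have hts : Gf t ≤ Gf s :=
      antitoneOn_of_deriv_nonpos (convex_Icc s t) hGcont hGdiff hGderiv hsI htI hst
    have hGfs : Gf s = Lf s := by
      simp [hGf, hφs]
    have hGft : Gf t = Lf t * Real.exp (1/5 * φ t)
        - ε * K * Real.exp (1/5 * φ t) * (t - s) := rfl
    have hTpos : 0 < Real.exp (1/5 * φ t) := Real.exp_pos _
    have final : Lf t * Real.exp (1/5 * φ t)
        ≤ Lf s + ε * K * (t - s) * Real.exp (1/5 * φ t) := by
      rw [hGft, hGfs] at hts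
      linarith [hts]
    have hexp : Real.exp (-(1/5 * φ t)) = (Real.exp (1/5 * φ t))⁻¹ := Real.exp_neg _
    have h6 : Lf t - ε * K * (t - s) ≤ Lf s * (Real.exp (1/5 * φ t))⁻¹ := by
      rw [← div_eq_mul_inv, le_div_iff₀ hTpos]
      nlinarith [final]
    have hLft : Lf t = Real.sqrt (Complex.normSq (w1 t) + ε ^ 2)
        + 2 * Real.sqrt (Complex.normSq (p t) + ε ^ 2) := rfl
    have hLfs : Lf s = Real.sqrt (Complex.normSq (w1 s) + ε ^ 2)
        + 2 * Real.sqrt (Complex.normSq (p s) + ε ^ 2) := rfl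
    rw [← hLft, ← hLfs, hexp]
    linarith [h6]
  -- pass to the limit ε → 0 via a δ-argument
  have hExpos : 0 < Real.exp (-(1/5 * φ t)) := Real.exp_pos _
  have hEx1 : Real.exp (-(1/5 * φ t)) ≤ 1 := Real.exp_le_one_iff.mpr (by linarith)
  have hlim : ‖w1 t‖ + 2 * ‖p t‖ ≤ (‖w1 s‖ + 2 * ‖p s‖) * Real.exp (-(1/5 * φ t)) := by
    apply le_of_forall_pos_le_add
    intro δ hδ
    have hM0 : 0 < 3 + K * (t - s) := by nlinarith [hK0, sub_nonneg.mpr hst]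
    set ε := δ / (3 + K * (t - s)) with hεdef
    have hεpos : 0 < ε := div_pos hδ hM0
    have hm := main ε hεpos
    have hub : ∀ z : ℂ, Real.sqrt (Complex.normSq z + ε ^ 2) ≤ ‖z‖ + ε := by
      intro z
      have hz2 : ‖z‖ ^ 2 = Complex.normSq z := by
        rw [Complex.sq_norm]
      have h2 : Complex.normSq z + ε ^ 2 ≤ (‖z‖ + ε) ^ 2 := by
        nlinarith [norm_nonneg z, hεpos.le]
      have h3 := Real.sqrt_le_sqrt h2
      rwa [Real.sqrt_sq (by positivity)] at h3
    have hlb : ∀ z : ℂ, ‖z‖ ≤ Real.sqrt (Complex.normSq z + ε ^ 2) := by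
      intro z
      have h1 : ‖z‖ = Real.sqrt (Complex.normSq z) := by
        rw [Complex.norm_def]
      rw [h1]
      exact Real.sqrt_le_sqrt (by nlinarith)
    have c1 : Real.sqrt (Complex.normSq (w1 s) + ε ^ 2)
        + 2 * Real.sqrt (Complex.normSq (p s) + ε ^ 2)
        ≤ (‖w1 s‖ + 2 * ‖p s‖) + 3 * ε := by linarith [hub (w1 s), hub (p s)]
    have c2 : (Real.sqrt (Complex.normSq (w1 s) + ε ^ 2)
        + 2 * Real.sqrt (Complex.normSq (p s) + ε ^ 2)) * Real.exp (-(1/5 * φ t))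
        ≤ ((‖w1 s‖ + 2 * ‖p s‖) + 3 * ε) * Real.exp (-(1/5 * φ t)) :=
      mul_le_mul_of_nonneg_right c1 hExpos.le
    have c3 : 3 * ε * Real.exp (-(1/5 * φ t)) ≤ 3 * ε := by nlinarith [hEx1, hεpos.le]
    have hεM : ε * (3 + K * (t - s)) = δ := by
      rw [hεdef]; field_simp
    linarith [hm, c2, c3, hlb (w1 t), hlb (p t), hεM]
  -- endpoint conversions
  have hgs := hgpos s hsI
  have hgt := hgpos t htI
  have hm_s : (g s ^ 2 * a ^ 2)⁻¹ ≤ 1/5 :=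
    (aux_facts hgs (hg'np s hsI) ha (hell s hsI)).2.2.2
  have hm_t : (g t ^ 2 * a ^ 2)⁻¹ ≤ 1/5 :=
    (aux_facts hgt (hg'np t htI) ha (hell t htI)).2.2.2
  have hinvs0 : (0:ℝ) ≤ (g s ^ 2 * a ^ 2)⁻¹ := by positivity
  have hinvt0 : (0:ℝ) ≤ (g t ^ 2 * a ^ 2)⁻¹ := by positivity
  have et : ‖w2 t‖ / (g t * a) ≤ ‖p t‖ + (1/5) * ‖w1 t‖ := by
    have hid : (((g t * a : ℝ):ℂ) * w2 t) * (((g t ^ 2 * a ^ 2)⁻¹ : ℝ):ℂ)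
        = p t + Complex.I * (((g t ^ 2 * a ^ 2)⁻¹ : ℝ):ℂ) * w1 t := by
      simp only [hpdef]; ring
    have hnorm1 : ‖(((g t * a : ℝ):ℂ) * w2 t) * (((g t ^ 2 * a ^ 2)⁻¹ : ℝ):ℂ)‖
        = ‖w2 t‖ / (g t * a) := by
      rw [norm_mul, norm_mul, Complex.norm_real, Complex.norm_real,
        Real.norm_eq_abs, Real.norm_eq_abs, _root_.abs_of_pos (by positivity : (0:ℝ) < g t * a),
        _root_.abs_of_nonneg hinvt0]
      rw [div_eq_mul_inv]
      have : g t * a * ((g t ^ 2 * a ^ 2)⁻¹) = (g t * a)⁻¹ := by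
        field_simp
      calc g t * a * ‖w2 t‖ * (g t ^ 2 * a ^ 2)⁻¹
          = ‖w2 t‖ * (g t * a * (g t ^ 2 * a ^ 2)⁻¹) := by ring
      _ = ‖w2 t‖ * (g t * a)⁻¹ := by rw [this]
    have hnorm2 : ‖Complex.I * (((g t ^ 2 * a ^ 2)⁻¹ : ℝ):ℂ) * w1 t‖
        = (g t ^ 2 * a ^ 2)⁻¹ * ‖w1 t‖ := by
      rw [norm_mul, norm_mul, Complex.norm_I, Complex.norm_real, Real.norm_eq_abs,
        _root_.abs_of_nonneg hinvt0, one_mul]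
    calc ‖w2 t‖ / (g t * a)
        = ‖p t + Complex.I * (((g t ^ 2 * a ^ 2)⁻¹ : ℝ):ℂ) * w1 t‖ := by
          rw [← hid, hnorm1]
    _ ≤ ‖p t‖ + ‖Complex.I * (((g t ^ 2 * a ^ 2)⁻¹ : ℝ):ℂ) * w1 t‖ := norm_add_le _ _
    _ ≤ ‖p t‖ + (1/5) * ‖w1 t‖ := by
          rw [hnorm2]
          have := mul_le_mul_of_nonneg_right hm_t (norm_nonneg (w1 t))
          linarith
  have es : ‖p s‖ ≤ ‖w2 s‖ / (g s * a) + (1/5) * ‖w1 s‖ := by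
    have hid : p s = (((g s * a : ℝ):ℂ) * w2 s) * (((g s ^ 2 * a ^ 2)⁻¹ : ℝ):ℂ)
        - Complex.I * (((g s ^ 2 * a ^ 2)⁻¹ : ℝ):ℂ) * w1 s := by
      simp only [hpdef]; ring
    have hnorm1 : ‖(((g s * a : ℝ):ℂ) * w2 s) * (((g s ^ 2 * a ^ 2)⁻¹ : ℝ):ℂ)‖
        = ‖w2 s‖ / (g s * a) := by
      rw [norm_mul, norm_mul, Complex.norm_real, Complex.norm_real,
        Real.norm_eq_abs, Real.norm_eq_abs, _root_.abs_of_pos (by positivity : (0:ℝ) < g s * a),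
        _root_.abs_of_nonneg hinvs0]
      rw [div_eq_mul_inv]
      have : g s * a * ((g s ^ 2 * a ^ 2)⁻¹) = (g s * a)⁻¹ := by
        field_simp
      calc g s * a * ‖w2 s‖ * (g s ^ 2 * a ^ 2)⁻¹
          = ‖w2 s‖ * (g s * a * (g s ^ 2 * a ^ 2)⁻¹) := by ring
      _ = ‖w2 s‖ * (g s * a)⁻¹ := by rw [this]
    have hnorm2 : ‖Complex.I * (((g s ^ 2 * a ^ 2)⁻¹ : ℝ):ℂ) * w1 s‖
        = (g s ^ 2 * a ^ 2)⁻¹ * ‖w1 s‖ := by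
      rw [norm_mul, norm_mul, Complex.norm_I, Complex.norm_real, Real.norm_eq_abs,
        _root_.abs_of_nonneg hinvs0, one_mul]
    calc ‖p s‖ ≤ ‖(((g s * a : ℝ):ℂ) * w2 s) * (((g s ^ 2 * a ^ 2)⁻¹ : ℝ):ℂ)‖
        + ‖Complex.I * (((g s ^ 2 * a ^ 2)⁻¹ : ℝ):ℂ) * w1 s‖ := by
          rw [hid]; exact norm_sub_le _ _
    _ ≤ ‖w2 s‖ / (g s * a) + (1/5) * ‖w1 s‖ := by
          rw [hnorm1, hnorm2]
          have := mul_le_mul_of_nonneg_right hm_s (norm_nonneg (w1 s))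
          linarith
  -- final assembly
  have hφt : φ t = ∫ τ in s..t, 1 / g τ := rfl
  rw [← hφt]
  have hB0 : 0 ≤ ‖w1 s‖ + ‖w2 s‖ / (g s * a) := by positivity
  have hLs2B : ‖w1 s‖ + 2 * ‖p s‖ ≤ 2 * (‖w1 s‖ + ‖w2 s‖ / (g s * a)) := by
    have hd0 : 0 ≤ ‖w2 s‖ / (g s * a) := by positivity
    linarith [es, norm_nonneg (w1 s)]
  have hq : (‖w1 s‖ + 2 * ‖p s‖) * Real.exp (-(1/5 * φ t))
      ≤ (2 * (‖w1 s‖ + ‖w2 s‖ / (g s * a))) * Real.exp (-(1/5 * φ t)) :=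
    mul_le_mul_of_nonneg_right hLs2B hExpos.le
  have hBEx : 0 ≤ (‖w1 s‖ + ‖w2 s‖ / (g s * a)) * Real.exp (-(1/5 * φ t)) := by positivity
  linarith [hlim, et, hq, hBEx, norm_nonneg (p t), norm_nonneg (w1 t)]
end AuxLemmas


theorem stmt_16
    (n : ℕ)
    (g g' g'' : ℝ → ℝ)
    (hg_deriv : ∀ t ∈ Ici (0:ℝ), HasDerivWithinAt g (g' t) (Ici 0) t)
    (hg_deriv' : ∀ t ∈ Ici (0:ℝ), HasDerivWithinAt g' (g'' t) (Ici 0) t)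
    (hg_cont : ContinuousOn g'' (Ici 0))
    (hD1 : ∀ t ∈ Ici (0:ℝ), 0 < g t ∧ g' t ≤ 0 ∧ 0 ≤ g'' t)
    (hD2 : ¬ IntegrableOn g (Ici 0))
    (hD3 : ∃ C₁ > (0:ℝ), ∃ C₂ > (0:ℝ), ∀ t ∈ Ici (0:ℝ),
      |g' t| ≤ C₁ * g t * (1 / (1 + t)) ∧ |g'' t| ≤ C₂ * g t * (1 / (1 + t)) ^ 2)
    :
    ∃ C > (0:ℝ), ∃ C' > (0:ℝ),
      ∀ (ξ : EuclideanSpace ℝ (Fin n)),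
      ∀ s t : ℝ, 0 ≤ s → s ≤ t →
        (∀ τ ∈ Icc s t, 5 * (1 - g' τ / 2) ≤ g τ ^ 2 * ‖ξ‖ ^ 2) →
      ∀ E11 E12 E21 E22 : ℝ → ℂ,
        E11 s = 1 → E12 s = 0 → E21 s = 0 → E22 s = 1 →
        (∀ τ ∈ Ici s,
          HasDerivAt E11 (Complex.I * ((0 : ℂ) * E11 τ + ((‖ξ‖ : ℝ) : ℂ) * E21 τ)) τ ∧
          HasDerivAt E21 (Complex.I * (((‖ξ‖ : ℝ) : ℂ) * E11 τ + (Complex.I * ((g τ * ‖ξ‖ ^ 2 : ℝ) : ℂ)) * E21 τ)) τ ∧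
          HasDerivAt E12 (Complex.I * ((0 : ℂ) * E12 τ + ((‖ξ‖ : ℝ) : ℂ) * E22 τ)) τ ∧
          HasDerivAt E22 (Complex.I * (((‖ξ‖ : ℝ) : ℂ) * E12 τ + (Complex.I * ((g τ * ‖ξ‖ ^ 2 : ℝ) : ℂ)) * E22 τ)) τ) →
        ‖E11 t‖ ≤ C' * Real.exp (-(C * ∫ τ in s..t, 1 / g τ)) ∧
        ‖E12 t‖ ≤ C' * Real.exp (-(C * ∫ τ in s..t, 1 / g τ)) / (g s * ‖ξ‖) ∧
        ‖E21 t‖ ≤ C' * Real.exp (-(C * ∫ τ in s..t, 1 / g τ)) * (g t * ‖ξ‖) ∧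
        ‖E22 t‖ ≤ C' * Real.exp (-(C * ∫ τ in s..t, 1 / g τ)) * (g t / g s) := by
  refine ⟨1/5, by norm_num, 4, by norm_num, ?_⟩
  intro ξ s t hs0 hst hell E11 E12 E21 E22 h11 h12 h21 h22 hE
  have hIccIci : Icc s t ⊆ Ici (0:ℝ) := fun τ hτ => hs0.trans hτ.1
  have hIccIcis : Icc s t ⊆ Ici s := fun τ hτ => hτ.1
  have hsI : s ∈ Icc s t := ⟨le_refl s, hst⟩
  have hgs : 0 < g s := (hD1 s (hIccIci hsI)).1
  have hg's : g' s ≤ 0 := (hD1 s (hIccIci hsI)).2.1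
  -- positivity of ‖ξ‖
  have ha : 0 < ‖ξ‖ := by
    rcases (norm_nonneg ξ).lt_or_eq with h | h
    · exact h
    · exfalso
      have h5 := hell s hsI
      rw [← h] at h5
      nlinarith
  -- common hypotheses for the key estimate
  have hgd : ∀ τ ∈ Icc s t, HasDerivWithinAt g (g' τ) (Ici 0) τ :=
    fun τ hτ => hg_deriv τ (hIccIci hτ)
  have hgpos : ∀ τ ∈ Icc s t, 0 < g τ := fun τ hτ => (hD1 τ (hIccIci hτ)).1
  have hg'np : ∀ τ ∈ Icc s t, g' τ ≤ 0 := fun τ hτ => (hD1 τ (hIccIci hτ)).2.1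
  have hgcont0 : ContinuousOn g (Ici 0) := fun τ hτ => (hg_deriv τ hτ).continuousWithinAt
  have hg'cont0 : ContinuousOn g' (Ici 0) := fun τ hτ => (hg_deriv' τ hτ).continuousWithinAt
  have hgcont : ContinuousOn g (Icc s t) := hgcont0.mono hIccIci
  have hg'cont : ContinuousOn g' (Icc s t) := hg'cont0.mono hIccIci
  have R1 := key_estimate g g' ‖ξ‖ s t hs0 hst ha hgd hgpos hg'np hgcont hg'cont hell
    E11 E21 (fun τ hτ => (hE τ (hIccIcis hτ)).1) (fun τ hτ => (hE τ (hIccIcis hτ)).2.1)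
  have R2 := key_estimate g g' ‖ξ‖ s t hs0 hst ha hgd hgpos hg'np hgcont hg'cont hell
    E12 E22 (fun τ hτ => (hE τ (hIccIcis hτ)).2.2.1) (fun τ hτ => (hE τ (hIccIcis hτ)).2.2.2)
  rw [h11, h21] at R1
  rw [h12, h22] at R2
  simp only [norm_one, norm_zero, zero_div, add_zero, zero_add] at R1 R2
  have hgt : 0 < g t := hgpos t ⟨hst, le_refl t⟩
  have hgta : 0 < g t * ‖ξ‖ := by positivity
  have hgsa : 0 < g s * ‖ξ‖ := by positivity
  have hexppos : 0 < Real.exp (-(1/5 * ∫ τ in s..t, 1 / g τ)) := Real.exp_pos _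
  have hd1 : 0 ≤ ‖E21 t‖ / (g t * ‖ξ‖) := by positivity
  have hd2 : 0 ≤ ‖E12 t‖ := norm_nonneg _
  refine ⟨?_, ?_, ?_, ?_⟩
  · -- E11
    nlinarith [R1]
  · -- E12
    rw [le_div_iff₀ hgsa]
    have h2 : 0 ≤ ‖E22 t‖ / (g t * ‖ξ‖) := by positivity
    have h3 : ‖E12 t‖ ≤ 4 * (1 / (g s * ‖ξ‖)) * Real.exp (-(1/5 * ∫ τ in s..t, 1 / g τ)) := by
      nlinarith [R2]
    calc ‖E12 t‖ * (g s * ‖ξ‖)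
        ≤ (4 * (1 / (g s * ‖ξ‖)) * Real.exp (-(1/5 * ∫ τ in s..t, 1 / g τ))) * (g s * ‖ξ‖) :=
          mul_le_mul_of_nonneg_right h3 hgsa.le
    _ = 4 * Real.exp (-(1/5 * ∫ τ in s..t, 1 / g τ)) := by field_simp
  · -- E21
    have h4 : ‖E21 t‖ / (g t * ‖ξ‖) ≤ 4 * Real.exp (-(1/5 * ∫ τ in s..t, 1 / g τ)) := by
      nlinarith [R1, norm_nonneg (E11 t)]
    rw [div_le_iff₀ hgta] at h4
    linarith [h4]
  · -- E22
    have h5 : ‖E22 t‖ / (g t * ‖ξ‖)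
        ≤ 4 * (1 / (g s * ‖ξ‖)) * Real.exp (-(1/5 * ∫ τ in s..t, 1 / g τ)) := by
      nlinarith [R2, norm_nonneg (E12 t)]
    rw [div_le_iff₀ hgta] at h5
    calc ‖E22 t‖ ≤ 4 * (1 / (g s * ‖ξ‖)) * Real.exp (-(1/5 * ∫ τ in s..t, 1 / g τ))
        * (g t * ‖ξ‖) := h5
    _ = 4 * Real.exp (-(1/5 * ∫ τ in s..t, 1 / g τ)) * (g t / g s) := by
        field_simp
end

section
/- Let g : [0,∞) → ℝ be continuous, positive and non-increasing, and set G(t) = 1 + ∫₀ᵗ g(τ)dτ. Then for every constant C > 0 there exist constants C₁ > 0 and K > 0 such that for all 0 ≤ s ≤ t: exp( −C ∫₀^s dτ/g(τ) ) · exp( −C₁ ∫_s^t g(τ)dτ ) ≤ K exp( −C₁ G(t) ). (One may take C₁ = C/g(0)² and K = e^{C₁}.) -/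
open Set MeasureTheory

theorem stmt_17
    (g : ℝ → ℝ)
    (hgc : ContinuousOn g (Ici 0)) (hgpos : ∀ t ∈ Ici (0:ℝ), 0 < g t)
    (hmono : AntitoneOn g (Ici 0)) :
    ∀ C > (0:ℝ), ∃ C₁ > (0:ℝ), ∃ K > (0:ℝ), ∀ s t : ℝ, 0 ≤ s → s ≤ t →
      Real.exp (-(C * ∫ τ in (0:ℝ)..s, 1 / g τ)) *
        Real.exp (-(C₁ * ∫ τ in s..t, g τ)) ≤
      K * Real.exp (-(C₁ * (1 + ∫ τ in (0:ℝ)..t, g τ))) := by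
  intro C hC
  have hg0 : 0 < g 0 := hgpos 0 (mem_Ici.mpr le_rfl)
  have hC₁pos : 0 < C / (g 0)^2 := by positivity
  refine ⟨C / (g 0)^2, hC₁pos, Real.exp (C / (g 0)^2), Real.exp_pos _, ?_⟩
  intro s t hs hst
  set C₁ := C / (g 0)^2 with hC₁def
  have ht : (0:ℝ) ≤ t := hs.trans hst
  have hsub : ∀ a b : ℝ, 0 ≤ a → a ≤ b → uIcc a b ⊆ Ici (0:ℝ) := by
    intro a b ha hab x hx
    rw [uIcc_of_le hab] at hx
    exact le_trans ha hx.1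
  have hIg : ∀ a b : ℝ, 0 ≤ a → a ≤ b → IntervalIntegrable g volume a b := by
    intro a b ha hab
    exact (hgc.mono (hsub a b ha hab)).intervalIntegrable
  have hIinv : IntervalIntegrable (fun τ => 1 / g τ) volume 0 s := by
    apply ContinuousOn.intervalIntegrable
    apply ContinuousOn.div continuousOn_const (hgc.mono (hsub 0 s le_rfl hs))
    intro x hx
    exact (hgpos x (hsub 0 s le_rfl hs hx)).ne'
  -- key pointwise comparison integral
  have h1 : (∫ τ in (0:ℝ)..s, g τ) ≤ (g 0)^2 * ∫ τ in (0:ℝ)..s, 1 / g τ := by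
    rw [← intervalIntegral.integral_const_mul]
    apply intervalIntegral.integral_mono_on hs (hIg 0 s le_rfl hs)
      (hIinv.const_mul _)
    intro x hx
    have hx0 : (0:ℝ) ≤ x := hx.1
    have hgx : 0 < g x := hgpos x hx0
    have hle : g x ≤ g 0 := hmono (mem_Ici.mpr le_rfl) hx0 hx0
    rw [mul_one_div, le_div_iff₀ hgx]
    calc g x * g x ≤ g 0 * g 0 := by nlinarith
      _ = (g 0)^2 := by ring
  have h2 : (∫ τ in (0:ℝ)..s, g τ) + (∫ τ in s..t, g τ)
      = ∫ τ in (0:ℝ)..t, g τ :=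
    intervalIntegral.integral_add_adjacent_intervals (hIg 0 s le_rfl hs)
      (hIg s t hs hst)
  have hkey : C₁ * (∫ τ in (0:ℝ)..s, g τ) ≤ C * ∫ τ in (0:ℝ)..s, 1 / g τ := by
    have : C₁ * ((g 0)^2 * ∫ τ in (0:ℝ)..s, 1 / g τ)
        = C * ∫ τ in (0:ℝ)..s, 1 / g τ := by
      rw [hC₁def, ← mul_assoc, div_mul_cancel₀ C (pow_ne_zero 2 hg0.ne')]
    calc C₁ * (∫ τ in (0:ℝ)..s, g τ)
        ≤ C₁ * ((g 0)^2 * ∫ τ in (0:ℝ)..s, 1 / g τ) :=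
          mul_le_mul_of_nonneg_left h1 hC₁pos.le
      _ = C * ∫ τ in (0:ℝ)..s, 1 / g τ := this
  rw [← Real.exp_add, ← Real.exp_add, Real.exp_le_exp]
  nlinarith [h2, hkey]
end
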